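/- Let f be a nonzero polynomial in n variables over a field F with individual degree at most d. For a finite set S ⊆ F, if a point is chosen uniformly at random from S^n, the probability that f vanishes at this point is at most 1 - (1 - d/|S|)^n. -/

import Mathlib

open Finset

lemma sz_key {F : Type*} [Field F] [DecidableEq F] :
    ∀ (n : ℕ) {d : ℕ} (f : MvPolynomial (Fin n) F), f ≠ 0 →
      (∀ i : Fin n, f.degreeOf i ≤ d) → ∀ (S : Finset F),
      (S.card - d) ^ n ≤
        ((Fintype.piFinset fun _ : Fin n => S).filter
          (fun a => MvPolynomial.eval a f ≠ 0)).card := by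
  intro n
  induction n with
  | zero =>
    intro d f hf hdeg S
    simp only [pow_zero]
    refine Nat.one_le_iff_ne_zero.2 (Finset.card_ne_zero_of_mem
      (a := (fun _ => 0)) (Finset.mem_filter.2
        ⟨Fintype.mem_piFinset.2 (fun i => i.elim0), ?_⟩))
    have hC : f = MvPolynomial.C (MvPolynomial.eval (fun _ => (0:F)) f) :=
      MvPolynomial.eq_C_of_isEmpty f ▸ by
        rw [MvPolynomial.eq_C_of_isEmpty f]; simp
    intro h
    exact hf (by rw [hC, h, map_zero])
  | succ n ih =>
    intro d f hf hdeg S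
    set p := MvPolynomial.finSuccEquiv F n f with hp
    have hp0 : p ≠ 0 := by
      simp only [hp, ne_eq, EmbeddingLike.map_eq_zero_iff]
      exact hf
    set g := p.leadingCoeff with hg
    have hg0 : g ≠ 0 := Polynomial.leadingCoeff_ne_zero.2 hp0
    have hgdeg : ∀ i : Fin n, g.degreeOf i ≤ d := by
      intro i
      calc g.degreeOf i ≤ f.degreeOf i.succ :=
            MvPolynomial.degreeOf_coeff_finSuccEquiv f i _
        _ ≤ d := hdeg i.succ
    set Q := Fintype.piFinset fun _ : Fin n => S with hQ
    set A := Q.filter (fun a => MvPolynomial.eval a g ≠ 0) with hA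
    have hAcard : (S.card - d) ^ n ≤ A.card := ih g hg0 hgdeg S
    have hfiber : ∀ a ∈ A, S.card - d ≤
        (S.filter fun x => MvPolynomial.eval (Fin.cons x a) f ≠ 0).card := by
      intro a ha
      have hga : MvPolynomial.eval a g ≠ 0 := (Finset.mem_filter.1 ha).2
      set q := p.map (MvPolynomial.eval a) with hq
      have hlc : q.leadingCoeff = MvPolynomial.eval a g :=
        Polynomial.leadingCoeff_map_of_leadingCoeff_ne_zero _ hga
      have hq0 : q ≠ 0 := by
        intro h
        rw [h, Polynomial.leadingCoeff_zero] at hlc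
        exact hga hlc.symm
      have hqdeg : q.natDegree ≤ d := by
        calc q.natDegree ≤ p.natDegree := Polynomial.natDegree_map_le
          _ = f.degreeOf 0 := MvPolynomial.natDegree_finSuccEquiv f
          _ ≤ d := hdeg 0
      have hset : (S.filter fun x => MvPolynomial.eval (Fin.cons x a) f ≠ 0)
          = S \ (S.filter fun x => Polynomial.eval x q = 0) := by
        ext x
        simp only [Finset.mem_filter, Finset.mem_sdiff, hq,
          MvPolynomial.eval_eq_eval_mv_eval', ← hp]
        tauto
      rw [hset, Finset.card_sdiff_of_subset (Finset.filter_subset _ _)]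
      have hroots : (S.filter fun x => Polynomial.eval x q = 0).card ≤ d := by
        have hsub : (S.filter fun x => Polynomial.eval x q = 0) ⊆ q.roots.toFinset := by
          intro x hx
          rw [Multiset.mem_toFinset, Polynomial.mem_roots hq0]
          exact (Finset.mem_filter.1 hx).2
        calc (S.filter fun x => Polynomial.eval x q = 0).card
            ≤ q.roots.toFinset.card := Finset.card_le_card hsub
          _ ≤ Multiset.card q.roots := q.roots.toFinset_card_le
          _ ≤ q.natDegree := q.card_roots'
          _ ≤ d := hqdeg
      omega
    set T := (Fintype.piFinset fun _ : Fin (n+1) => S).filter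
      (fun a => MvPolynomial.eval a f ≠ 0) with hT
    have hbij : T.card =
        ((S ×ˢ Q).filter (fun xa : F × (Fin n → F) =>
          MvPolynomial.eval (Fin.cons xa.1 xa.2) f ≠ 0)).card := by
      apply Finset.card_nbij' (fun y => (y 0, Fin.tail y))
        (fun xa => Fin.cons xa.1 xa.2)
      · intro y hy
        rw [hT, Finset.mem_coe, Finset.mem_filter, Fintype.mem_piFinset] at hy
        simp only [Finset.mem_coe, Finset.mem_filter, Finset.mem_product, Fintype.mem_piFinset]
        refine ⟨⟨hy.1 0, Fintype.mem_piFinset.2 fun i => hy.1 i.succ⟩, ?_⟩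
        rw [Fin.cons_self_tail]
        exact hy.2
      · intro xa hxa
        rw [Finset.mem_coe, Finset.mem_filter, Finset.mem_product, Fintype.mem_piFinset] at hxa
        rw [hT, Finset.mem_coe, Finset.mem_filter, Fintype.mem_piFinset]
        refine ⟨fun i => ?_, hxa.2⟩
        refine Fin.cases ?_ ?_ i
        · simpa using hxa.1.1
        · intro j; simpa using hxa.1.2 j
      · intro y _; exact Fin.cons_self_tail y
      · intro xa _; simp
    rw [hbij]
    have hsum : ((S ×ˢ Q).filter (fun xa : F × (Fin n → F) =>
          MvPolynomial.eval (Fin.cons xa.1 xa.2) f ≠ 0)).card =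
        ∑ a ∈ Q, (S.filter fun x => MvPolynomial.eval (Fin.cons x a) f ≠ 0).card := by
      rw [Finset.card_eq_sum_card_fiberwise
        (f := fun xa : F × (Fin n → F) => xa.2) (t := Q)
        (by intro xa hxa
            exact (Finset.mem_product.1 (Finset.mem_filter.1 hxa).1).2)]
      refine Finset.sum_congr rfl fun a haQ => ?_
      apply Finset.card_nbij' (fun xa => xa.1) (fun x => (x, a))
      · intro xa hxa
        simp only [Finset.mem_coe, Finset.mem_filter, Finset.mem_product] at hxa
        obtain ⟨⟨⟨h1, _⟩, h2⟩, h3⟩ := hxa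
        subst h3
        exact Finset.mem_filter.2 ⟨h1, h2⟩
      · intro x hx
        rw [Finset.mem_coe, Finset.mem_filter] at hx
        exact Finset.mem_filter.2
          ⟨Finset.mem_filter.2 ⟨Finset.mem_product.2 ⟨hx.1, haQ⟩, hx.2⟩, rfl⟩
      · intro xa hxa
        simp only [Finset.mem_coe, Finset.mem_filter] at hxa
        exact Prod.ext rfl hxa.2.symm
      · intro x _; rfl
    rw [hsum]
    calc (S.card - d) ^ (n + 1) = (S.card - d) ^ n * (S.card - d) := by ring
      _ ≤ A.card * (S.card - d) := Nat.mul_le_mul_right _ hAcard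
      _ = ∑ _a ∈ A, (S.card - d) := by rw [Finset.sum_const, smul_eq_mul, mul_comm]
      _ ≤ ∑ a ∈ A, (S.filter fun x => MvPolynomial.eval (Fin.cons x a) f ≠ 0).card :=
          Finset.sum_le_sum hfiber
      _ ≤ ∑ a ∈ Q, (S.filter fun x => MvPolynomial.eval (Fin.cons x a) f ≠ 0).card :=
          Finset.sum_le_sum_of_subset (Finset.filter_subset _ _)

/-- Schwartz–Zippel (individual degree, probabilistic version): for a nonzero `n`-variate
polynomial `f` of individual degree at most `d` and a finite nonempty set `S ⊆ F` with
`|S| ≥ d`, the fraction of points of the grid `S^n` where `f` vanishes is at most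
`1 - (1 - d/|S|)^n`. -/
theorem schwartz_zippel_individual_degree_prob
    {F : Type*} [Field F] [DecidableEq F] {n d : ℕ}
    (f : MvPolynomial (Fin n) F) (hf : f ≠ 0)
    (hdeg : ∀ i : Fin n, f.degreeOf i ≤ d)
    (S : Finset F) (hne : S.Nonempty) (hdS : d ≤ S.card) :
    (((Fintype.piFinset fun _ : Fin n => S).filter
        (fun a => MvPolynomial.eval a f = 0)).card : ℝ) / ((S.card : ℝ) ^ n)
      ≤ 1 - (1 - (d : ℝ) / (S.card : ℝ)) ^ n := by
  have hS0 : (0:ℝ) < (S.card : ℝ) := by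
    exact_mod_cast Finset.card_pos.2 hne
  have hkey := sz_key n f hf hdeg S
  set P := Fintype.piFinset fun _ : Fin n => S with hP
  have hPcard : P.card = S.card ^ n := by
    simp [hP, Fintype.card_piFinset]
  have hsplit : (P.filter (fun a => MvPolynomial.eval a f = 0)).card
      + (P.filter (fun a => MvPolynomial.eval a f ≠ 0)).card = S.card ^ n := by
    exact (Finset.card_filter_add_card_filter_not _).trans hPcard
  have hzeros : (P.filter (fun a => MvPolynomial.eval a f = 0)).card
      ≤ S.card ^ n - (S.card - d) ^ n := by omega
  rw [div_le_iff₀ (by positivity)]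
  have h1 : (1 - (d : ℝ) / (S.card : ℝ)) = ((S.card : ℝ) - d) / (S.card : ℝ) := by
    field_simp
  rw [h1]
  rw [div_pow, sub_mul, one_mul,
    div_mul_cancel₀ _ (ne_of_gt (by positivity : (0:ℝ) < (S.card : ℝ) ^ n))]
  calc ((P.filter (fun a => MvPolynomial.eval a f = 0)).card : ℝ)
      ≤ ((S.card ^ n - (S.card - d) ^ n : ℕ) : ℝ) := by exact_mod_cast hzeros
    _ = (S.card : ℝ) ^ n - ((S.card : ℝ) - d) ^ n := by
        rw [Nat.cast_sub (Nat.pow_le_pow_left (Nat.sub_le _ _) n)]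
        push_cast
        rw [Nat.cast_sub hdS]
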